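/- In any MLL proof net Θ, if L is a ⅋-link with premises A and B, then the empires e_Θ(A) and e_Θ(B) are equal. -/

import Mathlib

/-- An MLL link: an ID-link (axiom link) with two conclusions,
a tensor link or a par link with two premises and one conclusion. -/
inductive MLLLink (V : Type) where
  | idl (c₁ c₂ : V)
  | tensor (a b c : V)
  | par (a b c : V)
deriving DecidableEq

namespace MLLLink
variable {V V' : Type}

def prems : MLLLink V → List V
  | idl _ _ => []
  | tensor a b _ => [a, b]
  | par a b _ => [a, b]

def concls : MLLLink V → List V
  | idl c₁ c₂ => [c₁, c₂]
  | tensor _ _ c => [c]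
  | par _ _ c => [c]

def isId : MLLLink V → Bool
  | idl _ _ => true
  | _ => false

def isTensor : MLLLink V → Bool
  | tensor _ _ _ => true
  | _ => false

def isPar : MLLLink V → Bool
  | par _ _ _ => true
  | _ => false

/-- Relabel the vertices of a link along a map. -/
def map (f : V → V') : MLLLink V → MLLLink V'
  | idl c₁ c₂ => idl (f c₁) (f c₂)
  | tensor a b c => tensor (f a) (f b) (f c)
  | par a b c => par (f a) (f b) (f c)

/-- Forget whether a multiplicative link is ⊗ or ⅋ (normalizing ⅋ to ⊗). -/
def forget : MLLLink V → MLLLink V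
  | par a b c => tensor a b c
  | L => L

end MLLLink

/-- An MLL proof structure on the set `V` of formula occurrences:
every occurrence is the conclusion of exactly one link and the premise of
at most one link, and the occurrences appearing in a link are distinct. -/
structure MLLProofStructure (V : Type) [DecidableEq V] where
  links : Finset (MLLLink V)
  concl_exists : ∀ v : V, ∃ L ∈ links, v ∈ L.concls
  concl_unique : ∀ v : V, ∀ L ∈ links, ∀ L' ∈ links,
      v ∈ L.concls → v ∈ L'.concls → L = L'
  prem_unique : ∀ v : V, ∀ L ∈ links, ∀ L' ∈ links,
      v ∈ L.prems → v ∈ L'.prems → L = L'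
  nodup : ∀ L ∈ links, (L.prems ++ L.concls).Nodup

variable {V : Type} [DecidableEq V]

/-- The edge generated by a link under a DR-switching `S`
(`S L = true` selects the left premise of a ⅋-link). -/
def switchEdge (S : MLLLink V → Bool) (L : MLLLink V) (v w : V) : Prop :=
  match L with
  | .idl c₁ c₂ => v = c₁ ∧ w = c₂
  | .tensor a b c => (v = a ∧ w = c) ∨ (v = b ∧ w = c)
  | .par a b c =>
      (S (.par a b c) = true ∧ v = a ∧ w = c) ∨
      (S (.par a b c) = false ∧ v = b ∧ w = c)

def drRel (Θ : MLLProofStructure V) (S : MLLLink V → Bool) (v w : V) : Prop :=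
  ∃ L ∈ Θ.links, switchEdge S L v w

/-- The Danos–Regnier graph of a proof structure under a switching. -/
def drGraph (Θ : MLLProofStructure V) (S : MLLLink V → Bool) : SimpleGraph V :=
  SimpleGraph.fromRel (drRel Θ S)

/-- Danos–Regnier criterion: a proof net is a proof structure all of whose
DR-graphs are acyclic and connected. -/
def IsProofNet (Θ : MLLProofStructure V) : Prop :=
  ∀ S : MLLLink V → Bool, (drGraph Θ S).IsAcyclic ∧ (drGraph Θ S).Connected

/-- The edges from `A` down to the conclusion of the link of which `A` is a premise. -/
def belowEdges (Θ : MLLProofStructure V) (A : V) : Set (Sym2 V) :=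
  {e | ∃ L ∈ Θ.links, A ∈ L.prems ∧ ∃ c ∈ L.concls, e = s(A, c)}

/-- The DR-graph with the edge below `A` deleted. -/
def empGraph (Θ : MLLProofStructure V) (S : MLLLink V → Bool) (A : V) : SimpleGraph V :=
  (drGraph Θ S).deleteEdges (belowEdges Θ A)

/-- The vertex set of `Θ_S^A`: the connected component of `A` in the DR-graph
after deleting the edge below `A`. -/
def empComp (Θ : MLLProofStructure V) (S : MLLLink V → Bool) (A : V) : Set V :=
  {v | (empGraph Θ S A).Reachable A v}

/-- The empire of `A` in `Θ`. -/
def empire (Θ : MLLProofStructure V) (A : V) : Set V :=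
  ⋂ S : MLLLink V → Bool, empComp Θ S A

/-- A conclusion of `Θ` is a formula occurrence which is a premise of no link. -/
def IsConclusion (Θ : MLLProofStructure V) (v : V) : Prop :=
  ∀ L ∈ Θ.links, v ∉ L.prems

/-- All premises and conclusions of a link lie in `X`. -/
def allIn (X : Set V) (L : MLLLink V) : Prop :=
  (∀ w ∈ L.prems, w ∈ X) ∧ (∀ w ∈ L.concls, w ∈ X)

/-- `X` together with the links of `Θ` contained in `X` forms a proof structure. -/
def IsSubProofStructure (Θ : MLLProofStructure V) (X : Set V) : Prop :=
  ∀ v ∈ X, ∃ L ∈ Θ.links, v ∈ L.concls ∧ allIn X L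

def subDrRel (Θ : MLLProofStructure V) (X : Set V) (S : MLLLink V → Bool)
    (v w : V) : Prop :=
  ∃ L ∈ Θ.links, allIn X L ∧ switchEdge S L v w

/-- The DR-graph of the substructure of `Θ` induced on `X`. -/
def subDrGraph (Θ : MLLProofStructure V) (X : Set V) (S : MLLLink V → Bool) :
    SimpleGraph V :=
  SimpleGraph.fromRel (subDrRel Θ X S)

/-- `X` is a sub-proof net of `Θ`: it induces a proof structure whose
DR-graphs are all acyclic and connected (on `X`). -/
def IsSubProofNet (Θ : MLLProofStructure V) (X : Set V) : Prop :=
  IsSubProofStructure Θ X ∧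
    ∀ S : MLLLink V → Bool, (subDrGraph Θ X S).IsAcyclic ∧
      ∀ v ∈ X, ∀ w ∈ X, (subDrGraph Θ X S).Reachable v w

/-- `A` is a conclusion of the substructure induced on `X`. -/
def IsConclusionOfSub (Θ : MLLProofStructure V) (X : Set V) (A : V) : Prop :=
  A ∈ X ∧ ∀ L ∈ Θ.links, allIn X L → A ∉ L.prems

/-- `e` is an isomorphism of the underlying link graphs of `Θ₁` and `Θ₂`,
forgetting the ⊗/⅋ labels: they witness that `Θ₁` and `Θ₂` are in the same PS-family. -/
def FamilyIso {V₁ V₂ : Type} [DecidableEq V₁] [DecidableEq V₂]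
    (Θ₁ : MLLProofStructure V₁) (Θ₂ : MLLProofStructure V₂) (e : V₁ ≃ V₂) : Prop :=
  Θ₁.links.image (fun L => (L.map e).forget) = Θ₂.links.image MLLLink.forget

/-- The number of (multiplicative) links at which the ⊗/⅋-labellings of
`Θ₁` and `Θ₂` differ along `e`. -/
def diffCount {V₁ V₂ : Type} [DecidableEq V₁] [DecidableEq V₂]
    (Θ₁ : MLLProofStructure V₁) (Θ₂ : MLLProofStructure V₂) (e : V₁ ≃ V₂) : ℕ :=
  (Θ₁.links.filter (fun L => L.map e ∉ Θ₂.links)).card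

section ParEmpireProof

open SimpleGraph

set_option linter.unusedSectionVars false
set_option linter.unusedVariables false

private lemma switchEdge_snd {S : MLLLink V → Bool} {L : MLLLink V} {v w : V}
    (h : switchEdge S L v w) :
    w ∈ L.concls ∧ (v ∈ L.prems ∨ v ∈ L.concls) := by
  cases L <;> simp [switchEdge, MLLLink.concls, MLLLink.prems] at h ⊢ <;> tauto

private lemma concls_eq_of_prem {L : MLLLink V} {x u w : V} (hx : x ∈ L.prems)
    (hu : u ∈ L.concls) (hw : w ∈ L.concls) : u = w := by
  cases L <;> simp [MLLLink.prems, MLLLink.concls] at * <;> simp_all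

private lemma switchEdge_congr {S S' : MLLLink V → Bool} {L : MLLLink V} {v w : V}
    (h : S L = S' L) : switchEdge S L v w ↔ switchEdge S' L v w := by
  cases L <;> simp only [switchEdge] <;> rw [h]

private lemma walk_aux {G' : SimpleGraph V} {x y : V} :
    ∀ {v w : V}, G'.Walk v w →
    ((G'.deleteEdges {s(x,y)}).Reachable x v ∨ (G'.deleteEdges {s(x,y)}).Reachable y v) →
    ((G'.deleteEdges {s(x,y)}).Reachable x w ∨ (G'.deleteEdges {s(x,y)}).Reachable y w) := by
  intro v w p
  induction p with
  | nil => exact id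
  | @cons v u w h q ih =>
    intro hv
    apply ih
    by_cases he : s(v, u) = s(x, y)
    · rcases Sym2.eq_iff.mp he with ⟨rfl, rfl⟩ | ⟨rfl, rfl⟩
      · exact Or.inr (Reachable.refl _)
      · exact Or.inl (Reachable.refl _)
    · have hadj : (G'.deleteEdges {s(x,y)}).Adj v u := by
        rw [deleteEdges_adj]; exact ⟨h, by simpa using he⟩
      rcases hv with hv | hv
      · exact Or.inl (hv.trans hadj.reachable)
      · exact Or.inr (hv.trans hadj.reachable)

variable {Θ : MLLProofStructure V} {A B C : V}

private lemma dist3 (hL : MLLLink.par A B C ∈ Θ.links) : A ≠ B ∧ A ≠ C ∧ B ≠ C := by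
  have h := Θ.nodup _ hL
  simp [MLLLink.prems, MLLLink.concls] at h
  tauto

private lemma below_prem {X : V} (hL : MLLLink.par A B C ∈ Θ.links)
    (hX : X ∈ (MLLLink.par A B C).prems) : belowEdges Θ X = {s(X, C)} := by
  ext e
  constructor
  · rintro ⟨L, hLm, hXP, c, hc, rfl⟩
    have hEq : L = MLLLink.par A B C := Θ.prem_unique X L hLm _ hL hXP hX
    subst hEq
    simp [MLLLink.concls] at hc
    subst hc
    rfl
  · rintro rfl
    exact ⟨MLLLink.par A B C, hL, hX, C, by simp [MLLLink.concls], rfl⟩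

private lemma extract_edge (hL : MLLLink.par A B C ∈ Θ.links) {S : MLLLink V → Bool}
    {X : V} (hXC : X ≠ C)
    (hnotpar : ¬ (switchEdge S (MLLLink.par A B C) X C ∨ switchEdge S (MLLLink.par A B C) C X))
    (h : drRel Θ S X C ∨ drRel Θ S C X) :
    ∃ L ∈ Θ.links, L ≠ MLLLink.par A B C ∧ C ∈ L.prems ∧ X ∈ L.concls ∧
      switchEdge S L C X := by
  have hCpar : C ∈ (MLLLink.par A B C).concls := by simp [MLLLink.concls]
  rcases h with ⟨L, hLm, hsw⟩ | ⟨L, hLm, hsw⟩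
  · exfalso
    have h2 := switchEdge_snd hsw
    have hEq : L = MLLLink.par A B C := Θ.concl_unique C L hLm _ hL h2.1 hCpar
    subst hEq
    exact hnotpar (Or.inl hsw)
  · have h2 := switchEdge_snd hsw
    rcases h2.2 with hCp | hCc
    · have hne : L ≠ MLLLink.par A B C := by
        rintro rfl
        exact hnotpar (Or.inr hsw)
      exact ⟨L, hLm, hne, hCp, h2.1, hsw⟩
    · exfalso
      have hEq : L = MLLLink.par A B C := Θ.concl_unique C L hLm _ hL hCc hCpar
      subst hEq
      exact hnotpar (Or.inr hsw)

/-- If the switching selects the B-side, there is no A–C edge. -/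
private lemma not_adj_AC (hΘ : IsProofNet Θ) (hL : MLLLink.par A B C ∈ Θ.links)
    {S : MLLLink V → Bool} (hS : S (MLLLink.par A B C) = false) :
    ¬ (drGraph Θ S).Adj A C := by
  obtain ⟨hAB, hAC, hBC⟩ := dist3 hL
  intro hadj
  obtain ⟨hne, hrel⟩ := (SimpleGraph.fromRel_adj _ A C).mp hadj
  obtain ⟨L, hLm, hLnp, hCp, hAcl, hsw⟩ := extract_edge hL hAC
    (by
      rintro (h | h) <;> simp only [switchEdge, hS] at h <;>
        rcases h with ⟨hb, -, -⟩ | ⟨-, h1, -⟩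
      · exact Bool.noConfusion hb
      · exact hAB h1
      · exact Bool.noConfusion hb
      · exact hBC h1.symm) hrel
  set S₁ : MLLLink V → Bool := fun M => if M = MLLLink.par A B C then true else S M with hS₁def
  have hS₁par : S₁ (MLLLink.par A B C) = true := by simp [hS₁def]
  have hS₁off : ∀ M : MLLLink V, M ≠ MLLLink.par A B C → S₁ M = S M := by
    intro M hM; simp [hS₁def, hM]
  have claim : ∀ v w : V, v ≠ w → drRel Θ S₁ v w →
      (drGraph Θ S).Adj v w ∧ s(v, w) ≠ s(B, C) := by
    rintro v w hvw ⟨L', hL'm, hsw'⟩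
    by_cases hpar : L' = MLLLink.par A B C
    · subst hpar
      have hvw2 : v = A ∧ w = C := by
        simp only [switchEdge, hS₁par] at hsw'
        rcases hsw' with ⟨-, ha, hb⟩ | ⟨hb, -, -⟩
        · exact ⟨ha, hb⟩
        · exact Bool.noConfusion hb
      rw [hvw2.1, hvw2.2]
      refine ⟨hadj, ?_⟩
      intro heq
      rcases Sym2.eq_iff.mp heq with ⟨h1, -⟩ | ⟨h1, -⟩
      · exact hAB h1
      · exact hAC h1
    · have hswS : switchEdge S L' v w := (switchEdge_congr (hS₁off L' hpar)).mp hsw'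
      refine ⟨(SimpleGraph.fromRel_adj _ v w).mpr ⟨hvw, Or.inl ⟨L', hL'm, hswS⟩⟩, ?_⟩
      intro heq
      rcases Sym2.eq_iff.mp heq with ⟨h1, h2⟩ | ⟨h1, h2⟩
      · -- v = B, w = C : then C is a conclusion of L', so L' = par, contradiction
        rw [h2] at hswS
        have hsnd := switchEdge_snd hswS
        exact hpar (Θ.concl_unique C L' hL'm _ hL hsnd.1 (by simp [MLLLink.concls]))
      · -- v = C, w = B : then C is a premise of L' and B a conclusion, so L' = L
        rw [h1, h2] at hswS
        have hsnd := switchEdge_snd hswS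
        rcases hsnd.2 with hCp' | hCc'
        · have hE : L' = L := Θ.prem_unique C L' hL'm L hLm hCp' hCp
          rw [hE] at hsnd
          exact hAB (concls_eq_of_prem hCp hAcl hsnd.1)
        · exact hpar (Θ.concl_unique C L' hL'm _ hL hCc' (by simp [MLLLink.concls]))
  have hle : drGraph Θ S₁ ≤ (drGraph Θ S).deleteEdges {s(B, C)} := by
    intro v w hvw
    obtain ⟨hvw', hrel'⟩ := (SimpleGraph.fromRel_adj _ v w).mp hvw
    rw [deleteEdges_adj]
    rcases hrel' with h | h
    · obtain ⟨h1, h2⟩ := claim v w hvw' h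
      exact ⟨h1, by simpa using h2⟩
    · obtain ⟨h1, h2⟩ := claim w v (Ne.symm hvw') h
      refine ⟨h1.symm, ?_⟩
      simp only [Set.mem_singleton_iff]
      rw [Sym2.eq_swap]; exact h2
  have hBCadj : (drGraph Θ S).Adj B C := by
    refine (SimpleGraph.fromRel_adj _ B C).mpr ⟨hBC, Or.inl ⟨_, hL, ?_⟩⟩
    simp [switchEdge, hS]
  have hbridge := (isAcyclic_iff_forall_adj_isBridge.mp (hΘ S).1) hBCadj
  have hreach : ((drGraph Θ S).deleteEdges {s(B, C)}).Reachable B C :=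
    ((hΘ S₁).2.preconnected B C).mono hle
  exact (isBridge_iff.mp hbridge) hreach

/-- If the switching selects the A-side, there is no B–C edge. -/
private lemma not_adj_BC (hΘ : IsProofNet Θ) (hL : MLLLink.par A B C ∈ Θ.links)
    {S : MLLLink V → Bool} (hS : S (MLLLink.par A B C) = true) :
    ¬ (drGraph Θ S).Adj B C := by
  obtain ⟨hAB, hAC, hBC⟩ := dist3 hL
  intro hadj
  obtain ⟨hne, hrel⟩ := (SimpleGraph.fromRel_adj _ B C).mp hadj
  obtain ⟨L, hLm, hLnp, hCp, hBcl, hsw⟩ := extract_edge hL hBC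
    (by
      rintro (h | h) <;> simp only [switchEdge, hS] at h <;>
        rcases h with ⟨-, h1, -⟩ | ⟨hb, -, -⟩
      · exact hAB h1.symm
      · exact Bool.noConfusion hb
      · exact hAC h1.symm
      · exact Bool.noConfusion hb) hrel
  set S₂ : MLLLink V → Bool := fun M => if M = MLLLink.par A B C then false else S M with hS₂def
  have hS₂par : S₂ (MLLLink.par A B C) = false := by simp [hS₂def]
  have hS₂off : ∀ M : MLLLink V, M ≠ MLLLink.par A B C → S₂ M = S M := by
    intro M hM; simp [hS₂def, hM]
  have claim : ∀ v w : V, v ≠ w → drRel Θ S₂ v w →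
      (drGraph Θ S).Adj v w ∧ s(v, w) ≠ s(A, C) := by
    rintro v w hvw ⟨L', hL'm, hsw'⟩
    by_cases hpar : L' = MLLLink.par A B C
    · subst hpar
      have hvw2 : v = B ∧ w = C := by
        simp only [switchEdge, hS₂par] at hsw'
        rcases hsw' with ⟨hb, -, -⟩ | ⟨-, ha, hb⟩
        · exact Bool.noConfusion hb
        · exact ⟨ha, hb⟩
      rw [hvw2.1, hvw2.2]
      refine ⟨hadj, ?_⟩
      intro heq
      rcases Sym2.eq_iff.mp heq with ⟨h1, -⟩ | ⟨h1, -⟩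
      · exact hAB h1.symm
      · exact hBC h1
    · have hswS : switchEdge S L' v w := (switchEdge_congr (hS₂off L' hpar)).mp hsw'
      refine ⟨(SimpleGraph.fromRel_adj _ v w).mpr ⟨hvw, Or.inl ⟨L', hL'm, hswS⟩⟩, ?_⟩
      intro heq
      rcases Sym2.eq_iff.mp heq with ⟨h1, h2⟩ | ⟨h1, h2⟩
      · -- v = A, w = C : C conclusion of L' → L' = par, contradiction
        rw [h2] at hswS
        have hsnd := switchEdge_snd hswS
        exact hpar (Θ.concl_unique C L' hL'm _ hL hsnd.1 (by simp [MLLLink.concls]))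
      · -- v = C, w = A : C premise of L', A conclusion → L' = L → A = B
        rw [h1, h2] at hswS
        have hsnd := switchEdge_snd hswS
        rcases hsnd.2 with hCp' | hCc'
        · have hE : L' = L := Θ.prem_unique C L' hL'm L hLm hCp' hCp
          rw [hE] at hsnd
          exact hAB (concls_eq_of_prem hCp hsnd.1 hBcl)
        · exact hpar (Θ.concl_unique C L' hL'm _ hL hCc' (by simp [MLLLink.concls]))
  have hle : drGraph Θ S₂ ≤ (drGraph Θ S).deleteEdges {s(A, C)} := by
    intro v w hvw
    obtain ⟨hvw', hrel'⟩ := (SimpleGraph.fromRel_adj _ v w).mp hvw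
    rw [deleteEdges_adj]
    rcases hrel' with h | h
    · obtain ⟨h1, h2⟩ := claim v w hvw' h
      exact ⟨h1, by simpa using h2⟩
    · obtain ⟨h1, h2⟩ := claim w v (Ne.symm hvw') h
      refine ⟨h1.symm, ?_⟩
      simp only [Set.mem_singleton_iff]
      rw [Sym2.eq_swap]; exact h2
  have hACadj : (drGraph Θ S).Adj A C := by
    refine (SimpleGraph.fromRel_adj _ A C).mpr ⟨hAC, Or.inl ⟨_, hL, ?_⟩⟩
    simp [switchEdge, hS]
  have hbridge := (isAcyclic_iff_forall_adj_isBridge.mp (hΘ S).1) hACadj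
  have hreach : ((drGraph Θ S).deleteEdges {s(A, C)}).Reachable A C :=
    ((hΘ S₂).2.preconnected A C).mono hle
  exact (isBridge_iff.mp hbridge) hreach

/-- Key graph identity: the A-empire graph for the A-selecting switching equals the
B-empire graph for the B-selecting switching. -/
private lemma emp_eq (hΘ : IsProofNet Θ) (hL : MLLLink.par A B C ∈ Θ.links)
    {S₁ S₂ : MLLLink V → Bool} (h1 : S₁ (MLLLink.par A B C) = true)
    (h2 : S₂ (MLLLink.par A B C) = false)
    (hagree : ∀ M : MLLLink V, M ≠ MLLLink.par A B C → S₁ M = S₂ M) :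
    empGraph Θ S₁ A = empGraph Θ S₂ B := by
  obtain ⟨hAB, hAC, hBC⟩ := dist3 hL
  have hbA : belowEdges Θ A = {s(A, C)} := below_prem hL (by simp [MLLLink.prems])
  have hbB : belowEdges Θ B = {s(B, C)} := below_prem hL (by simp [MLLLink.prems])
  have key : ∀ v w : V, v ≠ w →
      ((drRel Θ S₁ v w ∧ s(v,w) ≠ s(A,C)) → (drRel Θ S₂ v w ∧ s(v,w) ≠ s(B,C))) ∧
      ((drRel Θ S₂ v w ∧ s(v,w) ≠ s(B,C)) → (drRel Θ S₁ v w ∧ s(v,w) ≠ s(A,C))) := by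
    intro v w hvw
    constructor
    · rintro ⟨⟨L, hLm, hsw⟩, hne⟩
      by_cases hpar : L = MLLLink.par A B C
      · exfalso
        subst hpar
        have hvw2 : v = A ∧ w = C := by
          simp only [switchEdge, h1] at hsw
          rcases hsw with ⟨-, ha, hb⟩ | ⟨hb, -, -⟩
          · exact ⟨ha, hb⟩
          · exact Bool.noConfusion hb
        exact hne (by rw [hvw2.1, hvw2.2])
      · have hsw2 : switchEdge S₂ L v w := (switchEdge_congr (hagree L hpar)).mp hsw
        refine ⟨⟨L, hLm, hsw2⟩, ?_⟩
        intro heq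
        have hvadj : (drGraph Θ S₁).Adj v w :=
          (SimpleGraph.fromRel_adj _ _ _).mpr ⟨hvw, Or.inl ⟨L, hLm, hsw⟩⟩
        rcases Sym2.eq_iff.mp heq with ⟨hx, hy⟩ | ⟨hx, hy⟩
        · rw [hx, hy] at hvadj
          exact not_adj_BC hΘ hL h1 hvadj
        · rw [hx, hy] at hvadj
          exact not_adj_BC hΘ hL h1 hvadj.symm
    · rintro ⟨⟨L, hLm, hsw⟩, hne⟩
      by_cases hpar : L = MLLLink.par A B C
      · exfalso
        subst hpar
        have hvw2 : v = B ∧ w = C := by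
          simp only [switchEdge, h2] at hsw
          rcases hsw with ⟨hb, -, -⟩ | ⟨-, ha, hb⟩
          · exact Bool.noConfusion hb
          · exact ⟨ha, hb⟩
        exact hne (by rw [hvw2.1, hvw2.2])
      · have hsw1 : switchEdge S₁ L v w := (switchEdge_congr (hagree L hpar)).mpr hsw
        refine ⟨⟨L, hLm, hsw1⟩, ?_⟩
        intro heq
        have hvadj : (drGraph Θ S₂).Adj v w :=
          (SimpleGraph.fromRel_adj _ _ _).mpr ⟨hvw, Or.inl ⟨L, hLm, hsw⟩⟩
        rcases Sym2.eq_iff.mp heq with ⟨hx, hy⟩ | ⟨hx, hy⟩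
        · rw [hx, hy] at hvadj
          exact not_adj_AC hΘ hL h2 hvadj
        · rw [hx, hy] at hvadj
          exact not_adj_AC hΘ hL h2 hvadj.symm
  ext v w
  simp only [empGraph, hbA, hbB, deleteEdges_adj, drGraph, SimpleGraph.fromRel_adj,
    Set.mem_singleton_iff]
  constructor
  · rintro ⟨⟨hvw, hrel⟩, hne⟩
    rcases hrel with h | h
    · obtain ⟨h1', h2'⟩ := (key v w hvw).1 ⟨h, hne⟩
      exact ⟨⟨hvw, Or.inl h1'⟩, h2'⟩
    · obtain ⟨h1', h2'⟩ := (key w v (Ne.symm hvw)).1 ⟨h, by rw [Sym2.eq_swap]; exact hne⟩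
      refine ⟨⟨hvw, Or.inr h1'⟩, fun hh => h2' ?_⟩
      rw [Sym2.eq_swap]
      exact hh
  · rintro ⟨⟨hvw, hrel⟩, hne⟩
    rcases hrel with h | h
    · obtain ⟨h1', h2'⟩ := (key v w hvw).2 ⟨h, hne⟩
      exact ⟨⟨hvw, Or.inl h1'⟩, h2'⟩
    · obtain ⟨h1', h2'⟩ := (key w v (Ne.symm hvw)).2 ⟨h, by rw [Sym2.eq_swap]; exact hne⟩
      refine ⟨⟨hvw, Or.inr h1'⟩, fun hh => h2' ?_⟩
      rw [Sym2.eq_swap]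
      exact hh

/-- In the common graph, `B` and `A` are connected. -/
private lemma reach_BA (hΘ : IsProofNet Θ) (hL : MLLLink.par A B C ∈ Θ.links)
    {S₁ S₂ : MLLLink V → Bool} (h1 : S₁ (MLLLink.par A B C) = true)
    (h2 : S₂ (MLLLink.par A B C) = false)
    (hagree : ∀ M : MLLLink V, M ≠ MLLLink.par A B C → S₁ M = S₂ M) :
    (empGraph Θ S₂ B).Reachable B A := by
  obtain ⟨hAB, hAC, hBC⟩ := dist3 hL
  have hbA : belowEdges Θ A = {s(A, C)} := below_prem hL (by simp [MLLLink.prems])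
  have hbB : belowEdges Θ B = {s(B, C)} := below_prem hL (by simp [MLLLink.prems])
  have hGeq : empGraph Θ S₂ B = (drGraph Θ S₂).deleteEdges {s(B, C)} := by
    rw [empGraph, hbB]
  obtain ⟨p⟩ := (hΘ S₂).2.preconnected B A
  have hor := walk_aux (x := B) (y := C) p (Or.inl (Reachable.refl _))
  rw [← hGeq] at hor
  rcases hor with h | h
  · exact h
  · exfalso
    have hEq := emp_eq hΘ hL h1 h2 hagree
    rw [← hEq] at h
    have hACadj : (drGraph Θ S₁).Adj A C := by
      refine (SimpleGraph.fromRel_adj _ A C).mpr ⟨hAC, Or.inl ⟨_, hL, ?_⟩⟩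
      simp [switchEdge, h1]
    have hbridge := (isAcyclic_iff_forall_adj_isBridge.mp (hΘ S₁).1) hACadj
    have hGeqA : empGraph Θ S₁ A = (drGraph Θ S₁).deleteEdges {s(A, C)} := by
      rw [empGraph, hbA]
    rw [hGeqA] at h
    exact (isBridge_iff.mp hbridge) h.symm

end ParEmpireProof

/-- In an MLL proof net, the empires of the two premises of a ⅋-link coincide. -/
theorem par_empires_equal (Θ : MLLProofStructure V) (hΘ : IsProofNet Θ)
    (A B C : V) (hL : MLLLink.par A B C ∈ Θ.links) :
    empire Θ A = empire Θ B := by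
  obtain ⟨hAB, hAC, hBC⟩ := dist3 hL
  have hbA : belowEdges Θ A = {s(A, C)} := below_prem hL (by simp [MLLLink.prems])
  have hbB : belowEdges Θ B = {s(B, C)} := below_prem hL (by simp [MLLLink.prems])
  apply Set.Subset.antisymm
  · intro v hv
    rw [empire, Set.mem_iInter] at hv ⊢
    intro S
    by_cases hS : S (MLLLink.par A B C) = true
    · have hnadj := not_adj_BC hΘ hL hS
      have heq : empGraph Θ S B = drGraph Θ S := by
        rw [empGraph, hbB]
        ext x y
        rw [SimpleGraph.deleteEdges_adj]
        constructor
        · exact fun h => h.1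
        · intro h
          refine ⟨h, ?_⟩
          simp only [Set.mem_singleton_iff]
          intro heq2
          rcases Sym2.eq_iff.mp heq2 with ⟨rfl, rfl⟩ | ⟨rfl, rfl⟩
          · exact hnadj h
          · exact hnadj h.symm
      show (empGraph Θ S B).Reachable B v
      rw [heq]
      exact (hΘ S).2.preconnected B v
    · have hS2 : S (MLLLink.par A B C) = false := by
        cases h : S (MLLLink.par A B C) <;> simp_all
      set S₁ : MLLLink V → Bool :=
        fun M => if M = MLLLink.par A B C then true else S M with hS₁def
      have h1 : S₁ (MLLLink.par A B C) = true := by simp [hS₁def]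
      have hagree : ∀ M : MLLLink V, M ≠ MLLLink.par A B C → S₁ M = S M := by
        intro M hM; simp [hS₁def, hM]
      have hv' : (empGraph Θ S₁ A).Reachable A v := hv S₁
      have hEq := emp_eq hΘ hL h1 hS2 hagree
      rw [hEq] at hv'
      exact (reach_BA hΘ hL h1 hS2 hagree).trans hv'
  · intro v hv
    rw [empire, Set.mem_iInter] at hv ⊢
    intro S
    by_cases hS : S (MLLLink.par A B C) = false
    · have hnadj := not_adj_AC hΘ hL hS
      have heq : empGraph Θ S A = drGraph Θ S := by
        rw [empGraph, hbA]
        ext x y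
        rw [SimpleGraph.deleteEdges_adj]
        constructor
        · exact fun h => h.1
        · intro h
          refine ⟨h, ?_⟩
          simp only [Set.mem_singleton_iff]
          intro heq2
          rcases Sym2.eq_iff.mp heq2 with ⟨rfl, rfl⟩ | ⟨rfl, rfl⟩
          · exact hnadj h
          · exact hnadj h.symm
      show (empGraph Θ S A).Reachable A v
      rw [heq]
      exact (hΘ S).2.preconnected A v
    · have hS1 : S (MLLLink.par A B C) = true := by
        cases h : S (MLLLink.par A B C) <;> simp_all
      set S₂ : MLLLink V → Bool :=
        fun M => if M = MLLLink.par A B C then false else S M with hS₂def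
      have h2 : S₂ (MLLLink.par A B C) = false := by simp [hS₂def]
      have hagree : ∀ M : MLLLink V, M ≠ MLLLink.par A B C → S M = S₂ M := by
        intro M hM; simp [hS₂def, hM]
      have hv' : (empGraph Θ S₂ B).Reachable B v := hv S₂
      have hEq := emp_eq hΘ hL hS1 h2 hagree
      rw [← hEq] at hv'
      have hre := reach_BA hΘ hL hS1 h2 hagree
      rw [← hEq] at hre
      exact hre.symm.trans hv'
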